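/- (Equivalence of the two descriptions of the superposition-coding rate region, Theorem 4.) Let a₁, a₂, a_z, b₁, b_z be nonnegative real numbers with b₁ ≥ b_z (these play the roles of I(U;Y₁), I(U;Y₂), I(U;Z), I(V;Y₁|U), I(V;Z|U)). For nonnegative reals R₁, R₂ the following are equivalent: (A) there exist R₁s, R₁k ≥ 0 with R₁ = R₁s + R₁k such that, setting R_k := max{R₁k + R₂, max{R₁k, R₂} + a_z}, one has R_k ≤ a₂, R₁s ≤ b₁ − b_z, and R_k + R₁s ≤ a₁ + b₁ − b_z; (B) R₂ ≤ a₂ − a_z, R₁ ≤ (b₁ − b_z) + a₂ − a_z, max{R₁, R₂} ≤ (b₁ − b_z) + a₁ − a_z, and R₁ + R₂ ≤ (b₁ − b_z) + min{a₁, a₂}. -/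

import Mathlib

/-- Equivalence of the two descriptions of the superposition-coding rate region
(Theorem 4): the split form (A) in terms of `R₁ = R₁s + R₁k` is equivalent to the
direct form (B) in terms of `(R₁, R₂)`.  Here `a₁, a₂, a_z, b₁, b_z` play the roles
of `I(U;Y₁), I(U;Y₂), I(U;Z), I(V;Y₁|U), I(V;Z|U)` with `b₁ ≥ b_z`. -/
theorem superposition_region_equiv
    (a₁ a₂ az b₁ bz : ℝ) (ha₁ : 0 ≤ a₁) (ha₂ : 0 ≤ a₂) (haz : 0 ≤ az)
    (hb₁ : 0 ≤ b₁) (hbz : 0 ≤ bz) (hbb : bz ≤ b₁)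
    (R₁ R₂ : ℝ) (hR₁ : 0 ≤ R₁) (hR₂ : 0 ≤ R₂) :
    (∃ R₁s R₁k : ℝ, 0 ≤ R₁s ∧ 0 ≤ R₁k ∧ R₁ = R₁s + R₁k ∧
        max (R₁k + R₂) (max R₁k R₂ + az) ≤ a₂ ∧
        R₁s ≤ b₁ - bz ∧
        max (R₁k + R₂) (max R₁k R₂ + az) + R₁s ≤ a₁ + b₁ - bz) ↔
    (R₂ ≤ a₂ - az ∧
      R₁ ≤ (b₁ - bz) + a₂ - az ∧
      max R₁ R₂ ≤ (b₁ - bz) + a₁ - az ∧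
      R₁ + R₂ ≤ (b₁ - bz) + min a₁ a₂) := by
  constructor
  · rintro ⟨s, k, hs, hk, hR, h2, h3, h4⟩
    have h2a : k + R₂ ≤ a₂ := le_trans (le_max_left _ _) h2
    have h2b : k + az ≤ a₂ :=
      le_trans (add_le_add_left (le_max_left k R₂) az) (le_trans (le_max_right _ _) h2)
    have h2c : R₂ + az ≤ a₂ :=
      le_trans (add_le_add_left (le_max_right k R₂) az) (le_trans (le_max_right _ _) h2)
    have h4a : k + R₂ + s ≤ a₁ + b₁ - bz :=
      le_trans (add_le_add_left (le_max_left _ _) s) h4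
    have h4b : k + az + s ≤ a₁ + b₁ - bz := by
      refine le_trans (add_le_add_left ?_ s) h4
      exact le_trans (add_le_add_left (le_max_left k R₂) az) (le_max_right _ _)
    have h4c : R₂ + az + s ≤ a₁ + b₁ - bz := by
      refine le_trans (add_le_add_left ?_ s) h4
      exact le_trans (add_le_add_left (le_max_right k R₂) az) (le_max_right _ _)
    refine ⟨by linarith, by linarith, max_le (by linarith) (by linarith), ?_⟩
    rcases le_total a₁ a₂ with h | h
    · rw [min_eq_left h]; linarith
    · rw [min_eq_right h]; linarith
  · rintro ⟨h1, h2, h3, h4⟩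
    have h3a : R₁ ≤ b₁ - bz + a₁ - az := le_trans (le_max_left _ _) h3
    have h3b : R₂ ≤ b₁ - bz + a₁ - az := le_trans (le_max_right _ _) h3
    have h4a : R₁ + R₂ ≤ b₁ - bz + a₁ :=
      le_trans h4 (by linarith [min_le_left a₁ a₂])
    have h4b : R₁ + R₂ ≤ b₁ - bz + a₂ :=
      le_trans h4 (by linarith [min_le_right a₁ a₂])
    set K : ℝ := max 0 (max (R₁ - (b₁ - bz)) (R₁ + R₂ + az - a₁ - (b₁ - bz))) with hK
    have hK0 : 0 ≤ K := le_max_left _ _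
    have hKR : K ≤ R₁ :=
      max_le hR₁ (max_le (by linarith) (by linarith))
    have hKa : R₁ - (b₁ - bz) ≤ K := le_trans (le_max_left _ _) (le_max_right _ _)
    have hKb : R₁ + R₂ + az - a₁ - (b₁ - bz) ≤ K :=
      le_trans (le_max_right _ _) (le_max_right _ _)
    have hK2 : K + R₂ ≤ a₂ := by
      have : K ≤ a₂ - R₂ :=
        max_le (by linarith) (max_le (by linarith) (by linarith))
      linarith
    have hK3 : K + az ≤ a₂ := by
      have : K ≤ a₂ - az :=
        max_le (by linarith) (max_le (by linarith) (by linarith))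
      linarith
    refine ⟨R₁ - K, K, by linarith, hK0, by ring, ?_, by linarith, ?_⟩
    · exact max_le hK2 (by
        refine add_le_of_le_sub_right (max_le (by linarith) (by linarith)))
    · have hmm : max (K + R₂) (max K R₂ + az) ≤ a₁ + b₁ - bz - (R₁ - K) := by
        apply max_le (by linarith)
        apply add_le_of_le_sub_right
        exact max_le (by linarith) (by linarith)
      linarith
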